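/- arXiv:2003.07382 — 3 statements merged into one kernel-verified Lean document; each statement's English description precedes it below -/
import Mathlib

section
/- Let F be a spanning forest of the non-incidence graph of a polytope P and let p be a (d+2)-minor of the symbolic slack matrix S_P(x). Then the rehomogenization H(p^F) of the dehomogenization p^F (obtained by setting to 1 all variables indexed by edges of F) equals p divided by the product of all variables of F that divide every monomial of p. -/
open MvPolynomial Sum
open Classical


namespace RehomAux

def walkSeq {V : Type*} (F : SimpleGraph V) (vv : ℕ → V)
    (h : ∀ n, F.Adj (vv n) (vv (n+1))) (a : ℕ) : ∀ n, F.Walk (vv a) (vv (a + n))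
  | 0 => SimpleGraph.Walk.nil
  | (n+1) => (walkSeq F vv h a n).concat (h (a+n))

lemma walkSeq_length {V : Type*} (F : SimpleGraph V) (vv : ℕ → V)
    (h : ∀ n, F.Adj (vv n) (vv (n+1))) (a : ℕ) (n : ℕ) :
    (walkSeq F vv h a n).length = n := by
  induction n with
  | zero => rfl
  | succ n ih => simp [walkSeq, SimpleGraph.Walk.length_concat, ih]

lemma walkSeq_support {V : Type*} (F : SimpleGraph V) (vv : ℕ → V)
    (h : ∀ n, F.Adj (vv n) (vv (n+1))) (a : ℕ) (n : ℕ) :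
    (walkSeq F vv h a n).support = (List.range (n+1)).map (fun i => vv (a+i)) := by
  induction n with
  | zero => rfl
  | succ n ih =>
    rw [show walkSeq F vv h a (n+1) = (walkSeq F vv h a n).concat (h (a+n)) from rfl,
      SimpleGraph.Walk.support_concat, ih]
    conv_rhs => rw [List.range_succ]
    simp

lemma walkSeq_edges {V : Type*} (F : SimpleGraph V) (vv : ℕ → V)
    (h : ∀ n, F.Adj (vv n) (vv (n+1))) (a : ℕ) (n : ℕ) :
    (walkSeq F vv h a n).edges = (List.range n).map (fun i => s(vv (a+i), vv (a+i+1))) := by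
  induction n with
  | zero => rfl
  | succ n ih =>
    rw [show walkSeq F vv h a (n+1) = (walkSeq F vv h a n).concat (h (a+n)) from rfl,
      SimpleGraph.Walk.edges_concat, ih, List.concat_eq_append]
    conv_rhs => rw [List.range_succ]
    simp only [List.map_append, List.map_cons, List.map_nil, List.append_cancel_left_eq]
    rw [show a + (n+1) = a + n + 1 from rfl]

theorem weight_eq_zero {V : Type*} [Fintype V] (F : SimpleGraph V) (hac : F.IsAcyclic)
    (w : V → V → ℤ) (hsymm : ∀ u v, w u v = w v u)
    (hadj : ∀ u v, w u v ≠ 0 → F.Adj u v)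
    (hsum : ∀ u, ∑ v, w u v = 0) : ∀ u v, w u v = 0 := by
  by_contra hcon
  push_neg at hcon
  obtain ⟨u0, v0, h0⟩ := hcon
  have step : ∀ u v, w u v ≠ 0 → ∃ v', v' ≠ u ∧ w v v' ≠ 0 := by
    intro u v huv
    by_contra hc
    push_neg at hc
    have hs : ∑ v', w v v' = w v u := by
      refine Finset.sum_eq_single u (fun b _ hb => hc b hb) (by simp)
    rw [hsum v, hsymm v u] at hs
    exact huv hs.symm
  choose nxt hne hnz using step
  let S : ℕ → {q : V × V // w q.1 q.2 ≠ 0} := fun n =>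
    Nat.rec ⟨(u0, v0), h0⟩ (fun _ prev => ⟨(prev.1.2, nxt prev.1.1 prev.1.2 prev.2),
      hnz _ _ _⟩) n
  let vv : ℕ → V := fun n => (S n).1.1
  have hvv1 : ∀ n, vv (n+1) = (S n).1.2 := fun n => rfl
  have hadjv : ∀ n, F.Adj (vv n) (vv (n+1)) := by
    intro n
    rw [hvv1]
    exact hadj _ _ (S n).2
  have hnb : ∀ n, vv (n+2) ≠ vv n := by
    intro n
    show (S (n+1)).1.2 ≠ (S n).1.1
    exact hne _ _ _
  -- vv is not injective
  obtain ⟨A, B, hAB, hvAB⟩ := Finite.exists_ne_map_eq_of_infinite vv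
  have hex : ∃ d, 0 < d ∧ ∃ a, vv (a + d) = vv a := by
    rcases lt_or_gt_of_ne hAB with h | h
    · exact ⟨B - A, by omega, A, by rw [show A + (B - A) = B by omega, hvAB]⟩
    · exact ⟨A - B, by omega, B, by rw [show B + (A - B) = A by omega, hvAB]⟩
  classical
  obtain ⟨d, ⟨hdpos, a, hvd⟩, hmin⟩ :
      ∃ d, (0 < d ∧ ∃ a, vv (a+d) = vv a) ∧
        ∀ d' < d, ¬(0 < d' ∧ ∃ a, vv (a+d') = vv a) :=
    ⟨Nat.find hex, Nat.find_spec hex, fun d' h => Nat.find_min hex h⟩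
  have hdist : ∀ i j, i < j → j < d → vv (a+i) ≠ vv (a+j) := by
    intro i j hij hjd heq
    exact hmin (j - i) (by omega) ⟨by omega, a + i, by
      rw [show a + i + (j - i) = a + j by omega, heq]⟩
  have hva : ∀ i, 0 < i → i < d → vv (a+i) ≠ vv a := by
    intro i h1 h2 heq
    exact hdist 0 i h1 h2 (by rw [Nat.add_zero, heq])
  have hd3 : 3 ≤ d := by
    rcases Nat.lt_or_ge d 3 with h | h
    · interval_cases d
      · have h1 := hadjv a
        rw [hvd] at h1
        exact (F.irrefl h1).elim
      · exact (hnb a hvd).elim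
    · exact h
  -- build the cycle
  let W := walkSeq F vv hadjv a d
  let cyc : F.Walk (vv a) (vv a) := W.copy rfl hvd
  have hedges : cyc.edges = (List.range d).map (fun i => s(vv (a+i), vv (a+i+1))) := by
    simp only [cyc, SimpleGraph.Walk.edges_copy]
    exact walkSeq_edges F vv hadjv a d
  have hsupport : cyc.support = (List.range (d+1)).map (fun i => vv (a+i)) := by
    simp only [cyc, SimpleGraph.Walk.support_copy]
    exact walkSeq_support F vv hadjv a d
  have edge_ne : ∀ i j, i < j → j < d → s(vv (a+i), vv (a+i+1)) ≠ s(vv (a+j), vv (a+j+1)) := by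
    intro i j hij hjd heq
    rw [Sym2.eq_iff] at heq
    rcases heq with ⟨h1, h2⟩ | ⟨h1, h2⟩
    · exact hdist i j hij hjd h1
    · by_cases hj1 : j + 1 = d
      · have hia : vv (a+i) = vv a := by rw [h1, show a + j + 1 = a + (j+1) by omega, hj1, hvd]
        have hi0 : i = 0 := by
          by_contra hi0
          exact hva i (by omega) (by omega) hia
        subst hi0
        have : vv (a+1) = vv (a+j) := by simpa using h2
        exact hdist 1 j (by omega) hjd this
      · exact hdist i (j+1) (by omega) (by omega)
          (by rw [h1]; exact congrArg vv (Nat.add_assoc a j 1))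
  have hcyc : cyc.IsCycle := by
    refine ⟨⟨⟨?_⟩, ?_⟩, ?_⟩
    · -- edges nodup
      rw [hedges]
      refine List.Nodup.map_on ?_ List.nodup_range
      intro i hi j hj heq
      rw [List.mem_range] at hi hj
      rcases lt_trichotomy i j with h | h | h
      · exact (edge_ne i j h hj heq).elim
      · exact h
      · exact (edge_ne j i h hi heq.symm).elim
    · -- ne nil
      intro hnil
      have hlen : cyc.length = d := by
        rw [show cyc.length = W.length from SimpleGraph.Walk.length_copy _ _ _,
          walkSeq_length]
      rw [hnil] at hlen
      simp only [SimpleGraph.Walk.length_nil] at hlen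
      omega
    · -- support tail nodup
      rw [hsupport, List.range_succ_eq_map]
      simp only [List.map_cons, List.tail_cons, List.map_map]
      refine List.Nodup.map_on ?_ List.nodup_range
      intro i hi j hj heq
      rw [List.mem_range] at hi hj
      simp only [Function.comp] at heq
      have key : ∀ i j, i < j → j < d → vv (a + Nat.succ i) ≠ vv (a + Nat.succ j) := by
        intro i j hij hjd he
        by_cases hj1 : j + 1 = d
        · have : vv (a + Nat.succ i) = vv a := by
            rw [he, show a + Nat.succ j = a + d by omega, hvd]
          exact hva (i+1) (by omega) (by omega) (by simpa [Nat.succ_eq_add_one, ← Nat.add_assoc] using this)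
        · exact hdist (i+1) (j+1) (by omega) (by omega)
            (by simpa [Nat.succ_eq_add_one, ← Nat.add_assoc] using he)
      rcases lt_trichotomy i j with h | h | h
      · exact (key i j h hj heq).elim
      · exact h
      · exact (key j i h hi heq.symm).elim
  exact hac cyc hcyc




variable {k : ℕ}

theorem kl (F : SimpleGraph (Fin k ⊕ Fin k)) (hac : F.IsAcyclic)
    (t : Fin k × Fin k → ℤ)
    (hsupp : ∀ e, t e ≠ 0 → F.Adj (inl e.1) (inr e.2))
    (hrow : ∀ i, ∑ j, t (i, j) = 0)
    (hcol : ∀ j, ∑ i, t (i, j) = 0) : ∀ e, t e = 0 := by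
  classical
  let w : (Fin k ⊕ Fin k) → (Fin k ⊕ Fin k) → ℤ := fun u v =>
    match u, v with
    | Sum.inl i, Sum.inr j => t (i, j)
    | Sum.inr j, Sum.inl i => t (i, j)
    | _, _ => 0
  have hsymm' : ∀ u v, w u v = w v u := by
    rintro (i | i) (j | j) <;> rfl
  have hadj' : ∀ u v, w u v ≠ 0 → F.Adj u v := by
    rintro (i | i) (j | j) h
    · exact absurd rfl h
    · exact hsupp (i, j) h
    · exact (hsupp (j, i) h).symm
    · exact absurd rfl h
  have hsum' : ∀ u, ∑ v, w u v = 0 := by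
    rintro (i | j)
    · rw [Fintype.sum_sum_type]
      have h1 : ∀ a : Fin k, w (inl i) (inl a) = 0 := fun a => rfl
      have h2 : ∀ b : Fin k, w (inl i) (inr b) = t (i, b) := fun b => rfl
      simp only [h1, h2, Finset.sum_const_zero, zero_add]
      exact hrow i
    · rw [Fintype.sum_sum_type]

      have h1 : ∀ a : Fin k, w (inr j) (inl a) = t (a, j) := fun a => rfl
      have h2 : ∀ b : Fin k, w (inr j) (inr b) = 0 := fun b => rfl
      simp only [h1, h2, Finset.sum_const_zero, add_zero]
      exact hcol j
  have hz := weight_eq_zero F hac w hsymm' hadj' hsum'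
  intro e
  exact hz (inl e.1) (inr e.2)

noncomputable def Zm (F : SimpleGraph (Fin k ⊕ Fin k)) (m : Fin k × Fin k →₀ ℕ) :
    Fin k × Fin k →₀ ℕ :=
  m.filter (fun e => ¬ F.Adj (inl e.1) (inr e.2))

lemma Zm_apply (F : SimpleGraph (Fin k ⊕ Fin k)) (m : Fin k × Fin k →₀ ℕ)
    (e : Fin k × Fin k) :
    Zm F m e = if F.Adj (inl e.1) (inr e.2) then 0 else m e := by
  rw [Zm, Finsupp.filter_apply]
  by_cases h : F.Adj (inl e.1) (inr e.2) <;> simp [h]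

lemma deh_monomial (F : SimpleGraph (Fin k ⊕ Fin k)) (m : Fin k × Fin k →₀ ℕ) (c : ℝ) :
    aeval (fun e : Fin k × Fin k =>
        if F.Adj (inl e.1) (inr e.2) then 1 else X e) (monomial m c) =
      monomial (Zm F m) c := by
  rw [aeval_monomial, monomial_eq, algebraMap_eq]
  congr 1
  rw [Finsupp.prod, Finsupp.prod, Zm, Finsupp.support_filter, Finset.prod_filter]
  refine Finset.prod_congr rfl ?_
  intro e he
  by_cases h : F.Adj (inl e.1) (inr e.2) <;>
    simp [h, Finsupp.filter_apply]

lemma deh_sum (F : SimpleGraph (Fin k ⊕ Fin k)) (r : MvPolynomial (Fin k × Fin k) ℝ) :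
    aeval (fun e : Fin k × Fin k =>
        if F.Adj (inl e.1) (inr e.2) then 1 else X e) r =
      ∑ m ∈ r.support, monomial (Zm F m) (coeff m r) := by
  conv_lhs => rw [r.as_sum]
  rw [map_sum]
  exact Finset.sum_congr rfl fun m _ => deh_monomial F m _

lemma coeff_deh (F : SimpleGraph (Fin k ⊕ Fin k)) (r : MvPolynomial (Fin k × Fin k) ℝ)
    (n : Fin k × Fin k →₀ ℕ) :
    coeff n (aeval (fun e : Fin k × Fin k =>
        if F.Adj (inl e.1) (inr e.2) then 1 else X e) r) =
      ∑ m ∈ r.support.filter (fun m => Zm F m = n), coeff m r := by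
  rw [deh_sum, coeff_sum, Finset.sum_filter]
  exact Finset.sum_congr rfl fun m _ => by rw [coeff_monomial]

lemma X_dvd_iff_supp {σ : Type*} (i : σ) (r : MvPolynomial σ ℝ) :
    X i ∣ r ↔ ∀ m ∈ r.support, m i ≠ 0 := by
  classical
  constructor
  · rintro ⟨s, rfl⟩ m hm
    intro hmi
    rw [mem_support_iff] at hm
    rw [coeff_X_mul'] at hm
    simp [Finsupp.mem_support_iff, hmi] at hm
  · intro h
    refine ⟨∑ m ∈ r.support, monomial (m - Finsupp.single i 1) (coeff m r), ?_⟩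
    rw [Finset.mul_sum]
    conv_lhs => rw [r.as_sum]
    refine Finset.sum_congr rfl fun m hm => ?_
    rw [show (X i : MvPolynomial σ ℝ) = monomial (Finsupp.single i 1) 1 from rfl,
      monomial_mul, one_mul, add_tsub_cancel_of_le ?_]
    rw [Finsupp.single_le_iff]
    exact Nat.one_le_iff_ne_zero.mpr (h m hm)

lemma det_good (M : Matrix (Fin k) (Fin k) (MvPolynomial (Fin k × Fin k) ℝ))
    (hM : ∀ i j, M i j = 0 ∨ M i j = X (i, j)) :
    ∀ m ∈ M.det.support,
      (∀ i, ∑ j, m (i, j) = 1) ∧ (∀ j, ∑ i, m (i, j) = 1) ∧ (∀ e, m e ≤ 1) := by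
  classical
  intro m hm
  rw [Matrix.det_apply] at hm
  have hm' := MvPolynomial.support_sum hm
  rw [Finset.mem_biUnion] at hm'
  obtain ⟨σ, -, hmσ⟩ := hm'
  have hmσ' := MvPolynomial.support_smul hmσ
  by_cases hall : ∀ i, M (σ i) i = X (σ i, i)
  · have hprod : (∏ i, M (σ i) i) = monomial (∑ i, Finsupp.single ((σ i : Fin k), i) 1) 1 := by
      rw [monomial_sum_one]
      exact Finset.prod_congr rfl fun i _ => (hall i)
    rw [hprod] at hmσ'
    rw [support_monomial] at hmσ'
    simp only [one_ne_zero, if_false, Finset.mem_singleton] at hmσ'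
    subst hmσ'
    have happ : ∀ a b, (∑ i, Finsupp.single ((σ i : Fin k), i) (1:ℕ)) (a, b) =
        if σ b = a then 1 else 0 := by
      intro a b
      rw [Finsupp.finset_sum_apply]
      rw [Finset.sum_eq_single b]
      · rw [Finsupp.single_apply]
        by_cases h : σ b = a
        · simp [h]
        · simp [h, Prod.ext_iff]
      · intro c _ hcb
        rw [Finsupp.single_apply]
        simp [Prod.ext_iff, hcb]
      · simp
    refine ⟨?_, ?_, ?_⟩
    · intro i
      simp only [happ]
      rw [Finset.sum_eq_single (σ.symm i)]
      · simp
      · intro c _ hc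
        have : σ c ≠ i := fun h => hc (by rw [← h]; simp)
        simp [this]
      · simp
    · intro j
      simp only [happ]
      rw [Finset.sum_eq_single (σ j)]
      · simp
      · intro c _ hc
        have : σ j ≠ c := Ne.symm hc
        simp [this]
      · simp
    · intro e
      rw [show e = (e.1, e.2) from rfl, happ]
      split <;> omega
  · push_neg at hall
    obtain ⟨i, hi⟩ := hall
    have h0 : M (σ i) i = 0 := (hM (σ i) i).resolve_right hi
    have hzero : (∏ x, M (σ x) x) = 0 := Finset.prod_eq_zero (Finset.mem_univ i) h0
    rw [hzero] at hmσ'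
    simp at hmσ'

end RehomAux


/-- Lemma (minor rehomogenization).  Let p be a minor of a symbolic slack matrix (a square
matrix M whose entries are 0 or distinct variables X (i,j)), and let F be a spanning forest
of the bipartite non-incidence graph (nodes are rows and columns, edges the variable
entries).  The dehomogenization p^F sets the variables of F to 1; the rehomogenization
H(p^F) is the unique polynomial which is homogeneous with respect to each row and column
grading, has no forest variable dividing it, and dehomogenizes to p^F.  Then H(p^F) equals
p divided by the product of all variables of F that divide p. -/
theorem rehomogenized_minor_eq_minor_div_forest_content (k : ℕ)
    (M : Matrix (Fin k) (Fin k) (MvPolynomial (Fin k × Fin k) ℝ))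
    (hM : ∀ i j, M i j = 0 ∨ M i j = X (i, j))
    (F : SimpleGraph (Fin k ⊕ Fin k)) (hacyclic : F.IsAcyclic)
    (hFedges : ∀ u w, F.Adj u w →
      (∃ i j, u = inl i ∧ w = inr j ∧ M i j = X (i, j)) ∨
      (∃ i j, u = inr j ∧ w = inl i ∧ M i j = X (i, j)))
    (p : MvPolynomial (Fin k × Fin k) ℝ) (hp : p = M.det)
    (deh : MvPolynomial (Fin k × Fin k) ℝ →ₐ[ℝ] MvPolynomial (Fin k × Fin k) ℝ)
    (hdeh : deh = aeval fun e : Fin k × Fin k =>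
      if F.Adj (inl e.1) (inr e.2) then 1 else X e)
    (D : Finset (Fin k × Fin k))
    (hD : D = Finset.univ.filter fun e : Fin k × Fin k =>
      F.Adj (inl e.1) (inr e.2) ∧ X e ∣ p)
    (multihom : MvPolynomial (Fin k × Fin k) ℝ → Prop)
    (hmultihom : ∀ q, multihom q ↔ ∀ m ∈ q.support, ∀ m' ∈ q.support,
      (∀ i : Fin k, ∑ j : Fin k, m (i, j) = ∑ j : Fin k, m' (i, j)) ∧
      (∀ j : Fin k, ∑ i : Fin k, m (i, j) = ∑ i : Fin k, m' (i, j)))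
    (contentFree : MvPolynomial (Fin k × Fin k) ℝ → Prop)
    (hcontentFree : ∀ q, contentFree q ↔
      ∀ e : Fin k × Fin k, F.Adj (inl e.1) (inr e.2) → ¬ (X e ∣ q)) :
    (∃ q, p = (∏ e ∈ D, X e) * q ∧ deh q = deh p ∧ multihom q ∧ (q ≠ 0 → contentFree q)) ∧
    (∀ q, deh q = deh p → multihom q → (q ≠ 0 → contentFree q) →
      p = (∏ e ∈ D, X e) * q) := by
  classical
  -- basic facts
  have good : ∀ m ∈ p.support,
      (∀ i, ∑ j, m (i, j) = 1) ∧ (∀ j, ∑ i, m (i, j) = 1) ∧ (∀ e, m e ≤ 1) := by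
    rw [hp]; exact RehomAux.det_good M hM
  have hmp : ∀ m ∈ p.support, ∀ m' ∈ p.support,
      (∀ i, ∑ j, m (i, j) = ∑ j, m' (i, j)) ∧ (∀ j, ∑ i, m (i, j) = ∑ i, m' (i, j)) := by
    intro m hm m' hm'
    exact ⟨fun i => by rw [(good m hm).1 i, (good m' hm').1 i],
      fun j => by rw [(good m hm).2.1 j, (good m' hm').2.1 j]⟩
  have injZ : ∀ r : MvPolynomial (Fin k × Fin k) ℝ,
      (∀ m ∈ r.support, ∀ m' ∈ r.support,
        (∀ i, ∑ j, m (i, j) = ∑ j, m' (i, j)) ∧ (∀ j, ∑ i, m (i, j) = ∑ i, m' (i, j))) →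
      ∀ m ∈ r.support, ∀ m' ∈ r.support, RehomAux.Zm F m = RehomAux.Zm F m' → m = m' := by
    intro r hr m hm m' hm' hZ
    have hsupp' : ∀ e : Fin k × Fin k, ((m e : ℤ) - m' e) ≠ 0 → F.Adj (inl e.1) (inr e.2) := by
      intro e he
      by_contra hfo
      apply he
      have hZe := DFunLike.congr_fun hZ e
      rw [RehomAux.Zm_apply, RehomAux.Zm_apply, if_neg hfo, if_neg hfo] at hZe
      omega
    have hrow' : ∀ i, ∑ j, ((m (i, j) : ℤ) - m' (i, j)) = 0 := by
      intro i
      rw [Finset.sum_sub_distrib, sub_eq_zero]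
      exact_mod_cast (hr m hm m' hm').1 i
    have hcol' : ∀ j, ∑ i, ((m (i, j) : ℤ) - m' (i, j)) = 0 := by
      intro j
      rw [Finset.sum_sub_distrib, sub_eq_zero]
      exact_mod_cast (hr m hm m' hm').2 j
    have ht := RehomAux.kl F hacyclic (fun e => (m e : ℤ) - m' e) hsupp' hrow' hcol'
    ext e
    have h0 : (m e : ℤ) - (m' e : ℤ) = 0 := ht e
    omega
  have coeffZ : ∀ r : MvPolynomial (Fin k × Fin k) ℝ,
      (∀ m ∈ r.support, ∀ m' ∈ r.support, RehomAux.Zm F m = RehomAux.Zm F m' → m = m') →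
      ∀ m₀ ∈ r.support, coeff (RehomAux.Zm F m₀) (deh r) = coeff m₀ r := by
    intro r hinj m₀ hm₀
    rw [hdeh, RehomAux.coeff_deh]
    have hfilter : r.support.filter (fun m => RehomAux.Zm F m = RehomAux.Zm F m₀) = {m₀} := by
      ext m
      simp only [Finset.mem_filter, Finset.mem_singleton]
      constructor
      · rintro ⟨hm, hZ⟩
        exact hinj m hm m₀ hm₀ hZ
      · rintro rfl
        exact ⟨hm₀, rfl⟩
    rw [hfilter, Finset.sum_singleton]
  have exmatch : ∀ r : MvPolynomial (Fin k × Fin k) ℝ, ∀ n, coeff n (deh r) ≠ 0 →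
      ∃ m ∈ r.support, RehomAux.Zm F m = n := by
    intro r n h
    rw [hdeh, RehomAux.coeff_deh] at h
    obtain ⟨m, hmf, -⟩ := Finset.exists_ne_zero_of_sum_ne_zero h
    rw [Finset.mem_filter] at hmf
    exact ⟨m, hmf.1, hmf.2⟩
  have hDmem : ∀ e : Fin k × Fin k, e ∈ D ↔ (F.Adj (inl e.1) (inr e.2) ∧ X e ∣ p) := by
    intro e; rw [hD]; simp
  set dD := ∑ e ∈ D, Finsupp.single e (1:ℕ) with hdD
  have hdDapp : ∀ e, dD e = if e ∈ D then 1 else 0 := by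
    intro e
    rw [hdD, Finsupp.finset_sum_apply]
    by_cases h : e ∈ D
    · rw [if_pos h, Finset.sum_eq_single e]
      · simp
      · intro b _ hb; rw [Finsupp.single_apply, if_neg hb]
      · intro h'; exact absurd h h'
    · rw [if_neg h, Finset.sum_eq_zero]
      intro b hb
      rw [Finsupp.single_apply, if_neg]
      rintro rfl; exact h hb
  have hprodD : (∏ e ∈ D, X e) = (monomial dD (1:ℝ)) := by
    rw [hdD, monomial_sum_one]
    exact Finset.prod_congr rfl fun e _ => rfl
  have hdDle : ∀ m ∈ p.support, dD ≤ m := by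
    intro m hm
    rw [Finsupp.le_def]
    intro e
    rw [hdDapp]
    by_cases h : e ∈ D
    · rw [if_pos h]
      have := (RehomAux.X_dvd_iff_supp e p).mp ((hDmem e).mp h).2 m hm
      omega
    · simp [h]
  have hZdD : RehomAux.Zm F dD = 0 := by
    ext e
    rw [RehomAux.Zm_apply]
    by_cases h : F.Adj (inl e.1) (inr e.2)
    · simp [h]
    · rw [if_neg h, hdDapp, if_neg (fun hD' => h ((hDmem e).mp hD').1)]
      simp
  constructor
  · -- existence
    set q0 := ∑ m ∈ p.support, monomial (m - dD) (coeff m p) with hq0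
    have hfact : p = monomial dD 1 * q0 := by
      rw [hq0, Finset.mul_sum]
      conv_lhs => rw [p.as_sum]
      refine Finset.sum_congr rfl fun m hm => ?_
      rw [monomial_mul, one_mul, add_tsub_cancel_of_le (hdDle m hm)]
    have hsupq0 : ∀ m'' ∈ q0.support, ∃ m ∈ p.support, m'' = m - dD := by
      intro m'' hm''
      rw [hq0] at hm''
      have h' := MvPolynomial.support_sum hm''
      rw [Finset.mem_biUnion] at h'
      obtain ⟨m, hm, hmem⟩ := h'
      have := MvPolynomial.support_monomial_subset hmem
      rw [Finset.mem_singleton] at this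
      exact ⟨m, hm, this⟩
    have hrowq0 : ∀ m ∈ p.support, ∀ i, ∑ j, (m - dD) (i, j) = 1 - ∑ j, dD (i, j) := by
      intro m hm i
      have hle : ∀ j : Fin k, dD (i, j) ≤ m (i, j) := fun j => Finsupp.le_def.mp (hdDle m hm) _
      calc ∑ j, (m - dD) (i, j) = ∑ j, (m (i, j) - dD (i, j)) :=
            Finset.sum_congr rfl fun j _ => Finsupp.tsub_apply m dD (i, j)
        _ = (∑ j, m (i, j)) - ∑ j, dD (i, j) :=
            Finset.sum_tsub_distrib _ (fun j _ => hle j)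
        _ = 1 - ∑ j, dD (i, j) := by rw [(good m hm).1 i]
    have hcolq0 : ∀ m ∈ p.support, ∀ j, ∑ i, (m - dD) (i, j) = 1 - ∑ i, dD (i, j) := by
      intro m hm j
      have hle : ∀ i : Fin k, dD (i, j) ≤ m (i, j) := fun i => Finsupp.le_def.mp (hdDle m hm) _
      calc ∑ i, (m - dD) (i, j) = ∑ i, (m (i, j) - dD (i, j)) :=
            Finset.sum_congr rfl fun i _ => Finsupp.tsub_apply m dD (i, j)
        _ = (∑ i, m (i, j)) - ∑ i, dD (i, j) :=
            Finset.sum_tsub_distrib _ (fun i _ => hle i)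
        _ = 1 - ∑ i, dD (i, j) := by rw [(good m hm).2.1 j]
    refine ⟨q0, by rw [hprodD]; exact hfact, ?_, ?_, ?_⟩
    · -- deh q0 = deh p
      have h1 : deh (monomial dD (1:ℝ)) = 1 := by
        rw [hdeh, RehomAux.deh_monomial, hZdD, monomial_zero', C_1]
      conv_rhs => rw [hfact]
      rw [map_mul, h1, one_mul]
    · -- multihom
      rw [hmultihom]
      intro m'' hm'' m''' hm'''
      obtain ⟨m, hm, rfl⟩ := hsupq0 m'' hm''
      obtain ⟨m', hm', rfl⟩ := hsupq0 m''' hm'''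
      exact ⟨fun i => by rw [hrowq0 m hm i, hrowq0 m' hm' i],
        fun j => by rw [hcolq0 m hm j, hcolq0 m' hm' j]⟩
    · -- contentFree
      intro hq0ne
      rw [hcontentFree]
      intro e hfo hdvd
      have hdvp : X e ∣ p := by
        rw [hfact]
        exact Dvd.dvd.mul_left hdvd _
      have heD : e ∈ D := (hDmem e).mpr ⟨hfo, hdvp⟩
      have hp0 : p ≠ 0 := by
        intro h0
        rw [h0] at hfact
        rcases mul_eq_zero.mp hfact.symm with h | h
        · exact one_ne_zero (MvPolynomial.monomial_eq_zero.mp h)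
        · exact hq0ne h
      obtain ⟨m, hm⟩ := MvPolynomial.support_nonempty.mpr hp0
      have hmem : m - dD ∈ q0.support := by
        rw [MvPolynomial.mem_support_iff, hq0, MvPolynomial.coeff_sum, Finset.sum_eq_single m]
        · rw [coeff_monomial, if_pos rfl]
          exact MvPolynomial.mem_support_iff.mp hm
        · intro mt hmt hne
          rw [coeff_monomial, if_neg]
          intro heq
          apply hne
          have h1 := add_tsub_cancel_of_le (hdDle mt hmt)
          have h2 := add_tsub_cancel_of_le (hdDle m hm)
          rw [← h1, ← h2, heq]
        · intro hnm; exact absurd hm hnm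
      have h1 := (RehomAux.X_dvd_iff_supp e q0).mp hdvd (m - dD) hmem
      have h2 : m e ≤ 1 := (good m hm).2.2 e
      have h3 : dD e = 1 := by rw [hdDapp, if_pos heD]
      rw [Finsupp.tsub_apply] at h1
      omega
  · -- uniqueness
    intro q hdq hmq hcq
    have hmq' := (hmultihom q).mp hmq
    have injp := injZ p hmp
    have injq := injZ q hmq'
    by_cases hq0 : q = 0
    · subst hq0
      have hdp0 : deh p = 0 := by rw [← hdq, map_zero]
      have hp0 : p = 0 := by
        by_contra hp0
        obtain ⟨m, hm⟩ := MvPolynomial.support_nonempty.mpr hp0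
        have hc := coeffZ p injp m hm
        rw [hdp0] at hc
        simp only [coeff_zero] at hc
        exact MvPolynomial.mem_support_iff.mp hm hc.symm
      rw [hp0, mul_zero]
    · have hcf := (hcontentFree q).mp (hcq hq0)
      have hp0 : p ≠ 0 := by
        intro h0
        obtain ⟨m, hm⟩ := MvPolynomial.support_nonempty.mpr hq0
        have hc := coeffZ q injq m hm
        rw [hdq, h0, map_zero] at hc
        simp only [coeff_zero] at hc
        exact MvPolynomial.mem_support_iff.mp hm hc.symm
      have matchPQ : ∀ m ∈ p.support, ∃ m' ∈ q.support,
          RehomAux.Zm F m' = RehomAux.Zm F m := by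
        intro m hm
        apply exmatch q
        rw [hdq, coeffZ p injp m hm]
        exact MvPolynomial.mem_support_iff.mp hm
      have matchQP : ∀ m' ∈ q.support, ∃ m ∈ p.support,
          RehomAux.Zm F m = RehomAux.Zm F m' := by
        intro m' hm'
        apply exmatch p
        rw [← hdq, coeffZ q injq m' hm']
        exact MvPolynomial.mem_support_iff.mp hm'
      obtain ⟨m₀, hm₀⟩ := MvPolynomial.support_nonempty.mpr hp0
      obtain ⟨m₀', hm₀', hZ₀⟩ := matchPQ m₀ hm₀
      set t : Fin k × Fin k → ℤ := fun e => (m₀ e : ℤ) - m₀' e with hts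
      have htfo : ∀ e, ¬ F.Adj (inl e.1) (inr e.2) → t e = 0 := by
        intro e he
        have hZe := DFunLike.congr_fun hZ₀ e
        rw [RehomAux.Zm_apply, RehomAux.Zm_apply, if_neg he, if_neg he] at hZe
        simp only [hts]
        omega
      have tconst : ∀ m ∈ p.support, ∀ m' ∈ q.support,
          RehomAux.Zm F m = RehomAux.Zm F m' → ∀ e, (m e : ℤ) = m' e + t e := by
        intro m hm m' hm' hZ e
        have hsupp' : ∀ e : Fin k × Fin k, (((m e : ℤ) - m' e) - t e) ≠ 0 →
            F.Adj (inl e.1) (inr e.2) := by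
          intro e' he'
          by_contra hfo
          apply he'
          have hZe := DFunLike.congr_fun hZ e'
          rw [RehomAux.Zm_apply, RehomAux.Zm_apply, if_neg hfo, if_neg hfo] at hZe
          have h0 := htfo e' hfo
          omega
        have hrow' : ∀ i, ∑ j, (((m (i, j) : ℤ) - m' (i, j)) - t (i, j)) = 0 := by
          intro i
          simp only [hts]
          rw [Finset.sum_sub_distrib, Finset.sum_sub_distrib, Finset.sum_sub_distrib]
          have e1 : (∑ j, (m (i, j) : ℤ)) = 1 := by exact_mod_cast (good m hm).1 i
          have e2 : (∑ j, (m₀ (i, j) : ℤ)) = 1 := by exact_mod_cast (good m₀ hm₀).1 i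
          have e3 : (∑ j, (m' (i, j) : ℤ)) = ∑ j, (m₀' (i, j) : ℤ) := by
            exact_mod_cast (hmq' m' hm' m₀' hm₀').1 i
          rw [e1, e2, e3]
          ring
        have hcol' : ∀ j, ∑ i, (((m (i, j) : ℤ) - m' (i, j)) - t (i, j)) = 0 := by
          intro j
          simp only [hts]
          rw [Finset.sum_sub_distrib, Finset.sum_sub_distrib, Finset.sum_sub_distrib]
          have e1 : (∑ i, (m (i, j) : ℤ)) = 1 := by exact_mod_cast (good m hm).2.1 j
          have e2 : (∑ i, (m₀ (i, j) : ℤ)) = 1 := by exact_mod_cast (good m₀ hm₀).2.1 j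
          have e3 : (∑ i, (m' (i, j) : ℤ)) = ∑ i, (m₀' (i, j) : ℤ) := by
            exact_mod_cast (hmq' m' hm' m₀' hm₀').2 j
          rw [e1, e2, e3]
          ring
        have hu := RehomAux.kl F hacyclic (fun e => ((m e : ℤ) - m' e) - t e)
          hsupp' hrow' hcol'
        have h0 : ((m e : ℤ) - (m' e : ℤ)) - t e = 0 := hu e
        omega
      have tnonneg : ∀ e, 0 ≤ t e := by
        intro e
        by_contra hneg
        push_neg at hneg
        have hfo : F.Adj (inl e.1) (inr e.2) := by
          by_contra hfo
          have := htfo e hfo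
          omega
        apply hcf e hfo
        rw [RehomAux.X_dvd_iff_supp]
        intro m' hm'
        obtain ⟨m, hm, hZ⟩ := matchQP m' hm'
        have := tconst m hm m' hm' hZ e
        omega
      have tle1 : ∀ e, t e ≤ 1 := by
        intro e
        have := (good m₀ hm₀).2.2 e
        simp only [hts]
        omega
      have htD : ∀ e, (dD e : ℤ) = t e := by
        intro e
        rw [hdDapp]
        by_cases heD : e ∈ D
        · rw [if_pos heD]
          obtain ⟨hfo, hdvd⟩ := (hDmem e).mp heD
          have hnq := hcf e hfo
          rw [RehomAux.X_dvd_iff_supp] at hnq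
          push_neg at hnq
          obtain ⟨m', hm', hm'e⟩ := hnq
          obtain ⟨m, hm, hZ⟩ := matchQP m' hm'
          have h1 := tconst m hm m' hm' hZ e
          have h2 := (RehomAux.X_dvd_iff_supp e p).mp hdvd m hm
          have h3 := (good m hm).2.2 e
          omega
        · rw [if_neg heD]
          by_contra h0
          have ht1 : t e = 1 := by
            have := tnonneg e
            have := tle1 e
            omega
          have hfo : F.Adj (inl e.1) (inr e.2) := by
            by_contra hfo
            have := htfo e hfo
            omega
          have hdvd : X e ∣ p := by
            rw [RehomAux.X_dvd_iff_supp]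
            intro m hm
            obtain ⟨m', hm', hZ⟩ := matchPQ m hm
            have := tconst m hm m' hm' hZ.symm e
            omega
          exact heD ((hDmem e).mpr ⟨hfo, hdvd⟩)
      have key : ∀ m ∈ p.support, ∀ m' ∈ q.support,
          RehomAux.Zm F m = RehomAux.Zm F m' → m = m' + dD := by
        intro m hm m' hm' hZ
        ext e
        have h1 := tconst m hm m' hm' hZ e
        have h2 := htD e
        rw [Finsupp.add_apply]
        omega
      have coeq : ∀ m ∈ p.support, ∀ m' ∈ q.support,
          RehomAux.Zm F m = RehomAux.Zm F m' → coeff m p = coeff m' q := by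
        intro m hm m' hm' hZ
        rw [← coeffZ p injp m hm, ← coeffZ q injq m' hm', ← hdq, hZ]
      rw [hprodD]
      conv_lhs => rw [p.as_sum]
      conv_rhs => rw [q.as_sum]
      rw [Finset.mul_sum]
      refine Finset.sum_bij' (i := fun m hm => Classical.choose (matchPQ m hm))
        (j := fun m' hm' => Classical.choose (matchQP m' hm'))
        (fun m hm => (Classical.choose_spec (matchPQ m hm)).1)
        (fun m' hm' => (Classical.choose_spec (matchQP m' hm')).1)
        ?_ ?_ ?_
      · intro m hm
        obtain ⟨hm', hZ'⟩ := Classical.choose_spec (matchPQ m hm)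
        obtain ⟨hm'', hZ''⟩ := Classical.choose_spec (matchQP _ hm')
        exact injp _ hm'' m hm (hZ''.trans hZ')
      · intro m' hm'
        obtain ⟨hm, hZ⟩ := Classical.choose_spec (matchQP m' hm')
        obtain ⟨hm'', hZ''⟩ := Classical.choose_spec (matchPQ _ hm)
        exact injq _ hm'' m' hm' (hZ''.trans hZ)
      · intro m hm
        obtain ⟨hm', hZ'⟩ := Classical.choose_spec (matchPQ m hm)
        rw [monomial_mul, one_mul, coeq m hm _ hm' hZ'.symm]
        exact congrArg
          (fun s => (monomial s) (coeff (Classical.choose (matchPQ m hm)) q))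
          ((key m hm _ hm' hZ'.symm).trans (add_comm _ _))
end

section
/- For positive reals satisfying the twelve linear relations x_{33} = x_{35} + 1 (and the other generators of the scaled Perles reduced slack ideal: x_{24}=x_{35}, x_{23}=x_{35}, x_{22}=1, x_{19}=x_{35}, x_{18}=x_{35}, x_{13}=x_{35}+1, x_{11}=x_{35}, x_{10}=1, x_2=1, x_1=x_{35}+1) together with x_{35}^2 + x_{35} − 1 = 0, every solution with x_{35} > 0 has x_{35} = (√5 − 1)/2; hence all coordinates of any positive real solution are irrational or equal to 1. -/
/-- In the scaled reduced slack ideal of the Perles polytope, every positive real solution of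
the generators x₃₅² + x₃₅ − 1 = 0, x₃₃ = x₃₅ + 1, x₂₄ = x₃₅, x₂₃ = x₃₅, x₂₂ = 1,
x₁₉ = x₃₅, x₁₈ = x₃₅, x₁₃ = x₃₅ + 1, x₁₁ = x₃₅, x₁₀ = 1, x₂ = 1, x₁ = x₃₅ + 1 has
x₃₅ = (√5 − 1)/2; hence all coordinates are irrational or equal to 1. -/
theorem perles_positive_solution_irrational
    (x1 x2 x10 x11 x13 x18 x19 x22 x23 x24 x33 x35 : ℝ)
    (h1 : 0 < x1) (h2 : 0 < x2) (h10 : 0 < x10) (h11 : 0 < x11) (h13 : 0 < x13)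
    (h18 : 0 < x18) (h19 : 0 < x19) (h22 : 0 < x22) (h23 : 0 < x23) (h24 : 0 < x24)
    (h33 : 0 < x33) (h35 : 0 < x35)
    (e0 : x35 ^ 2 + x35 - 1 = 0)
    (e1 : x33 = x35 + 1) (e2 : x24 = x35) (e3 : x23 = x35) (e4 : x22 = 1)
    (e5 : x19 = x35) (e6 : x18 = x35) (e7 : x13 = x35 + 1) (e8 : x11 = x35)
    (e9 : x10 = 1) (e10 : x2 = 1) (e11 : x1 = x35 + 1) :
    x35 = (Real.sqrt 5 - 1) / 2 ∧
    Irrational x35 ∧ Irrational x1 ∧ Irrational x11 ∧ Irrational x13 ∧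
    Irrational x18 ∧ Irrational x19 ∧ Irrational x23 ∧ Irrational x24 ∧
    Irrational x33 ∧ x2 = 1 ∧ x10 = 1 ∧ x22 = 1 := by
  have hs5 : Real.sqrt 5 ^ 2 = 5 := Real.sq_sqrt (by norm_num)
  have hkey : x35 = (Real.sqrt 5 - 1) / 2 := by
    have h : (x35 - (Real.sqrt 5 - 1) / 2) * (x35 + (Real.sqrt 5 + 1) / 2) = 0 := by
      nlinarith [hs5]
    rcases mul_eq_zero.mp h with h | h
    · linarith
    · exfalso
      have : 0 < Real.sqrt 5 := Real.sqrt_pos.mpr (by norm_num)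
      nlinarith
  have hirr5 : Irrational (Real.sqrt 5) := by
    have := Nat.Prime.irrational_sqrt (p := 5) (by norm_num)
    simpa using this
  have hx35 : Irrational x35 := by
    rw [hkey]
    have : Irrational ((Real.sqrt 5 - (1:ℚ))/(2:ℚ)) := (hirr5.sub_ratCast 1).div_ratCast (by norm_num)
    simpa using this
  have hx35' : Irrational (x35 + 1) := by
    simpa using hx35.add_ratCast 1
  refine ⟨hkey, hx35, ?_, ?_, ?_, ?_, ?_, ?_, ?_, ?_, e10, e9, e4⟩ <;>
    simp only [e1, e2, e3, e5, e6, e7, e8, e11] <;> first | exact hx35' | exact hx35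
end

section
/- Let S(x) be a symbolic slack matrix (a matrix over a polynomial ring whose entries are either 0 or distinct variables). If two monomials appearing in the Leibniz expansion of a k×k minor of S(x) become equal after setting the variables of a forest F of the non-incidence bipartite graph to 1, then the monomials were already equal. -/
open MvPolynomial Sum
open Classical

/-- Let S(x) be a symbolic slack matrix (entries 0 or distinct variables X (i,j)) and F a
forest in the bipartite non-incidence graph (nodes = rows and columns, an edge for each
variable entry).  If two monomials appearing in the Leibniz expansion of a k×k minor of
S(x) become equal after setting the variables of F to 1, then they were already equal. -/
theorem leibniz_monomials_equal_of_dehomogenization_equal (k : ℕ)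
    (M : Matrix (Fin k) (Fin k) (MvPolynomial (Fin k × Fin k) ℝ))
    (hM : ∀ i j, M i j = 0 ∨ M i j = X (i, j))
    (F : SimpleGraph (Fin k ⊕ Fin k)) (hacyclic : F.IsAcyclic)
    (hFedges : ∀ u w, F.Adj u w →
      (∃ i j, u = inl i ∧ w = inr j ∧ M i j = X (i, j)) ∨
      (∃ i j, u = inr j ∧ w = inl i ∧ M i j = X (i, j)))
    (deh : MvPolynomial (Fin k × Fin k) ℝ →ₐ[ℝ] MvPolynomial (Fin k × Fin k) ℝ)
    (hdeh : deh = aeval fun e : Fin k × Fin k =>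
      if F.Adj (inl e.1) (inr e.2) then 1 else X e)
    (σ τ : Equiv.Perm (Fin k))
    (hσ : ∏ i, M i (σ i) ≠ 0) (hτ : ∏ i, M i (τ i) ≠ 0)
    (heq : deh (∏ i, M i (σ i)) = deh (∏ i, M i (τ i))) :
    (∏ i, M i (σ i)) = ∏ i, M i (τ i) := by
  -- Step 1: every factor is a variable.
  have hσX : ∀ i, M i (σ i) = X (i, σ i) := by
    intro i
    rcases hM i (σ i) with h | h
    · exact absurd (Finset.prod_eq_zero (Finset.mem_univ i) h) hσ
    · exact h
  have hτX : ∀ i, M i (τ i) = X (i, τ i) := by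
    intro i
    rcases hM i (τ i) with h | h
    · exact absurd (Finset.prod_eq_zero (Finset.mem_univ i) h) hτ
    · exact h
  -- it suffices to show σ = τ pointwise
  suffices hst : ∀ i, σ i = τ i by
    exact Finset.prod_congr rfl fun i _ => by rw [hσX i, hst i, hτX i]
  -- Step 2: rewrite the dehomogenized products
  have h1 : ∀ i, deh (M i (σ i))
      = if F.Adj (inl i) (inr (σ i)) then 1 else X (i, σ i) := by
    intro i; rw [hσX i, hdeh, aeval_X]
  have h2 : ∀ i, deh (M i (τ i))
      = if F.Adj (inl i) (inr (τ i)) then 1 else X (i, τ i) := by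
    intro i; rw [hτX i, hdeh, aeval_X]
  have heq' : (∏ i, (if F.Adj (inl i) (inr (σ i)) then 1
        else X (i, σ i) : MvPolynomial (Fin k × Fin k) ℝ))
      = ∏ i, (if F.Adj (inl i) (inr (τ i)) then 1 else X (i, τ i)) := by
    have h := heq
    rw [map_prod, map_prod] at h
    simp only [h1, h2] at h
    exact h
  -- Step 3: extraction — if σ i ≠ τ i then the σ-edge at i is in F (symmetric in σ, τ).
  have key : ∀ (α β : Equiv.Perm (Fin k)),
      (∏ i, (if F.Adj (inl i) (inr (α i)) then 1
        else X (i, α i) : MvPolynomial (Fin k × Fin k) ℝ))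
        = (∏ i, (if F.Adj (inl i) (inr (β i)) then 1 else X (i, β i))) →
      ∀ i, α i ≠ β i → F.Adj (inl i) (inr (α i)) := by
    intro α β h i hne
    by_contra hadj
    have hev := congrArg (eval (fun v => if v = (i, α i) then (0:ℝ) else 1)) h
    rw [map_prod, map_prod] at hev
    have hL : (∏ j, eval (fun v => if v = (i, α i) then (0:ℝ) else 1)
        (if F.Adj (inl j) (inr (α j)) then 1 else X (j, α j))) = 0 := by
      refine Finset.prod_eq_zero (Finset.mem_univ i) ?_
      rw [if_neg hadj, eval_X]
      simp
    have hR : (∏ j, eval (fun v => if v = (i, α i) then (0:ℝ) else 1)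
        (if F.Adj (inl j) (inr (β j)) then 1 else X (j, β j))) ≠ 0 := by
      rw [Finset.prod_ne_zero_iff]
      intro j _
      by_cases hj : F.Adj (inl j) (inr (β j))
      · rw [if_pos hj]; simp
      · rw [if_neg hj, eval_X]
        have : (j, β j) ≠ (i, α i) := by
          intro hc
          have hji : j = i := (Prod.mk.injEq _ _ _ _ ▸ hc).1
          have : β i = α i := by
            have := (Prod.mk.injEq _ _ _ _ ▸ hc).2
            rwa [hji] at this
          exact hne this.symm
        simp [this]
    rw [hL] at hev
    exact hR hev.symm
  have hAσ : ∀ i, σ i ≠ τ i → F.Adj (inl i) (inr (σ i)) := key σ τ heq'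
  have hAτ : ∀ i, τ i ≠ σ i → F.Adj (inl i) (inr (τ i)) := key τ σ heq'.symm
  -- Step 4: graph-theoretic contradiction.
  intro i0
  by_contra hne0
  set π : Equiv.Perm (Fin k) := σ⁻¹ * τ with hπ
  have hστ : ∀ y, σ (π y) = τ y := by
    intro y
    simp [hπ, Equiv.Perm.mul_apply]
  have hfix : ∀ y, π y = y → σ y = τ y := by
    intro y hy
    rw [← hστ y, hy]
  -- the "disagreement set" is preserved by π
  have hDstep : ∀ j, σ j ≠ τ j → σ (π j) ≠ τ (π j) := by
    intro j hj hc
    have hπj : π j ≠ j := fun h => hj (hfix j h)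
    have : τ (π j) = τ j := by rw [← hc, hστ]
    exact hπj (τ.injective this)
  have hD : ∀ m, σ (π^[m] i0) ≠ τ (π^[m] i0) := by
    intro m
    induction m with
    | zero => simpa using hne0
    | succ m ih => rw [Function.iterate_succ_apply']; exact hDstep _ ih
  -- minimal period of i0 under π
  have hper : i0 ∈ Function.periodicPts (⇑π) := by
    refine ⟨orderOf π, orderOf_pos π, ?_⟩
    show (⇑π)^[orderOf π] i0 = i0
    rw [Equiv.Perm.iterate_eq_pow, pow_orderOf_eq_one]
    rfl
  set n := Function.minimalPeriod (⇑π) i0 with hn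
  have hnpos : 0 < n := Function.minimalPeriod_pos_of_mem_periodicPts hper
  -- the σ-edge at i0 is a bridge
  have hAdj0 : F.Adj (inl i0) (inr (σ i0)) := hAσ i0 hne0
  have hbridge := (SimpleGraph.isAcyclic_iff_forall_adj_isBridge.mp hacyclic) hAdj0
  have hnotreach := SimpleGraph.isBridge_iff.mp hbridge
  -- adjacency in the graph with the bridge removed
  have hG'adj : ∀ (a b : Fin k), F.Adj (inl a) (inr b) → (a ≠ i0 ∨ b ≠ σ i0) →
      (F \ SimpleGraph.fromEdgeSet {s(inl i0, inr (σ i0))}).Adj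
        ((inl a : Fin k ⊕ Fin k)) (inr b) := by
    intro a b hadj hab
    rw [SimpleGraph.sdiff_adj]
    refine ⟨hadj, ?_⟩
    rw [SimpleGraph.fromEdgeSet_adj]
    rintro ⟨he, -⟩
    rw [Set.mem_singleton_iff, Sym2.eq_iff] at he
    rcases he with ⟨ha, hb⟩ | ⟨ha, hb⟩
    · rcases hab with h | h
      · exact h (inl_injective ha)
      · exact h (inr_injective hb)
    · exact (inl_ne_inr ha).elim
  -- build the walk around the π-cycle of i0
  have hreach : ∀ m, m < n →
      (F \ SimpleGraph.fromEdgeSet {s(inl i0, inr (σ i0))}).Reachable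
        (inl i0) (inr (τ (π^[m] i0))) := by
    intro m
    induction m with
    | zero =>
      intro _
      have hadj : F.Adj (inl i0) (inr (τ i0)) := hAτ i0 (Ne.symm hne0)
      have : τ i0 ≠ σ i0 := Ne.symm hne0
      exact (hG'adj i0 (τ i0) hadj (Or.inr this)).reachable
    | succ m ih =>
      intro hlt
      have hm : m < n := Nat.lt_of_succ_lt hlt
      have h1 := ih hm
      have hji0 : π^[m+1] i0 ≠ i0 := by
        intro h
        exact Function.not_isPeriodicPt_of_pos_of_lt_minimalPeriod
          (Nat.succ_ne_zero m) hlt h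
      have hσj : σ (π^[m+1] i0) = τ (π^[m] i0) := by
        rw [Function.iterate_succ_apply', hστ]
      have hDj : σ (π^[m+1] i0) ≠ τ (π^[m+1] i0) := hD (m+1)
      have e1 : (F \ SimpleGraph.fromEdgeSet {s(inl i0, inr (σ i0))}).Adj
          (inr (τ (π^[m] i0))) (inl (π^[m+1] i0)) := by
        rw [← hσj]
        exact (hG'adj _ _ (hAσ _ hDj) (Or.inl hji0)).symm
      have e2 : (F \ SimpleGraph.fromEdgeSet {s(inl i0, inr (σ i0))}).Adj
          (inl (π^[m+1] i0)) (inr (τ (π^[m+1] i0))) :=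
        hG'adj _ _ (hAτ _ (Ne.symm hDj)) (Or.inl hji0)
      exact h1.trans (e1.reachable.trans e2.reachable)
  have hlast : τ (π^[n-1] i0) = σ i0 := by
    have h := hστ (π^[n-1] i0)
    have hn1 : (n - 1).succ = n := by omega
    rw [← Function.iterate_succ_apply' (⇑π) (n-1) i0, hn1,
      Function.iterate_minimalPeriod] at h
    exact h.symm
  have hfin := hreach (n-1) (Nat.pred_lt hnpos.ne')
  rw [hlast] at hfin
  exact hnotreach hfin
end
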